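/- For all (k,t,ω) ∈ K×ℝ₊×Ω, the extended value function satisfies v(k,t,ω) = sup_{P ∈ ℛ(k,t,ω)} E^P[ψ(k,t, ω ⊗̃_t X)], where v(k,t,ω) := sup_{P ∈ 𝒞(k,t,ω)} E^P[ψ(k,t,X)]. -/

import Mathlib

noncomputable section

open MeasureTheory Filter Topology Set
open scoped BigOperators NNReal ENNReal

/-- Euclidean space `ℝ^d`. -/
abbrev Ed (d : ℕ) := EuclideanSpace ℝ (Fin d)

/-- The path space `Ω = C(ℝ₊; ℝ^d)` with the local uniform topology. -/
abbrev PathR (d : ℕ) := C(ℝ≥0, Ed d)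

instance pathRMeasurableSpace (d : ℕ) : MeasurableSpace (PathR d) := borel _

instance pathRBorelSpace (d : ℕ) : BorelSpace (PathR d) := ⟨rfl⟩

/-- Lebesgue measure on `ℝ₊`. -/
def lebNN : Measure ℝ≥0 := (volume : Measure ℝ).comap (↑)

/-- The right-continuous natural filtration generated by the shifted coordinate process
`X_{·+t}`. -/
def shiftedFiltration (d : ℕ) (t : ℝ≥0) : Filtration ℝ≥0 (pathRMeasurableSpace d) where
  seq s := ⨅ (r : ℝ≥0) (_ : s < r),
    ⨆ (u : ℝ≥0) (_ : u ≤ r),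
      MeasurableSpace.comap (fun ω : PathR d => ω (u + t))
        (inferInstance : MeasurableSpace (Ed d))
  mono' := by
    intro s s' h
    refine le_iInf₂ fun r hr => ?_
    exact iInf₂_le r (lt_of_le_of_lt h hr)
  le' := by
    intro s
    refine le_trans (iInf₂_le (s + 1) (lt_add_one s)) ?_
    refine iSup₂_le fun u _ => ?_
    exact ((continuous_eval_const (u + t) : Continuous fun ω : PathR d => ω (u + t)).measurable).comap_le

/-- A process `M` is a local martingale (w.r.t. the filtration `ℱ` and the measure `P`)
if there is a localizing sequence of stopping times. -/
def IsLocalMartingale {d : ℕ} (ℱ : Filtration ℝ≥0 (pathRMeasurableSpace d))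
    (M : ℝ≥0 → PathR d → ℝ) (P : Measure (PathR d)) : Prop :=
  ∃ τ : ℕ → PathR d → ℝ≥0,
    (∀ n, IsStoppingTime ℱ (fun ω => ((τ n ω : ℝ≥0) : WithTop ℝ≥0))) ∧
    (∀ n ω, τ n ω ≤ τ (n + 1) ω) ∧
    (∀ᵐ ω ∂P, Tendsto (fun n => τ n ω) atTop atTop) ∧
    (∀ n, Martingale (stoppedProcess M (fun ω => ((τ n ω : ℝ≥0) : WithTop ℝ≥0))) ℱ P)

/-- The drift-compensated coordinate process `X^i_{s+t} - X^i_t - ∫_0^s β^i_u du`. -/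
def drifted {d : ℕ} (t : ℝ≥0) (β : ℝ≥0 → PathR d → Ed d) (i : Fin d) :
    ℝ≥0 → PathR d → ℝ :=
  fun s ω => ω (s + t) i - ω t i - ∫ u in Set.Icc (0 : ℝ≥0) s, β u ω i ∂lebNN

/-- `P` is the law of a continuous semimartingale after time `t` whose characteristics are
absolutely continuous with densities `(β, a)`: equivalently (martingale-problem
formulation), `X_{·+t} - X_t - ∫ β` and its products compensated by `∫ a` are local
martingales for the right-continuous natural filtration of `X_{·+t}`. -/
def IsACSemimartingaleWith {d : ℕ} (t : ℝ≥0) (β : ℝ≥0 → PathR d → Ed d)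
    (a : ℝ≥0 → PathR d → Fin d → Fin d → ℝ) (P : Measure (PathR d)) : Prop :=
  Measurable (Function.uncurry β) ∧ Measurable (Function.uncurry a) ∧
  (∀ i, IsLocalMartingale (shiftedFiltration d t) (drifted t β i) P) ∧
  (∀ i j, IsLocalMartingale (shiftedFiltration d t)
    (fun s ω => drifted t β i s ω * drifted t β j s ω -
      ∫ u in Set.Icc (0 : ℝ≥0) s, a u ω i j ∂lebNN) P)

/-- `Θ(k,t,ω) = {(b(k,f,t,ω), σσ*(k,f,t,ω)) : f ∈ F}`. -/
def Theta {d r : ℕ} {K F : Type*}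
    (b : K → F → ℝ≥0 → PathR d → Ed d)
    (σ : K → F → ℝ≥0 → PathR d → Fin d → Fin r → ℝ)
    (k : K) (t : ℝ≥0) (ω : PathR d) : Set (Ed d × (Fin d → Fin d → ℝ)) :=
  {x | ∃ f : F, x = (b k f t ω, fun i j => ∑ l, σ k f t ω i l * σ k f t ω j l)}

/-- The set `𝒞(k,t,ω)` of laws of continuous semimartingales after `t` which start in the
path `ω` on `[0,t]` and whose absolutely continuous differential characteristics take
values in `Θ(k, ·+t, X)`, `(λ ⊗ P)`-a.e. -/
def CC {d r : ℕ} {K F : Type*}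
    (b : K → F → ℝ≥0 → PathR d → Ed d)
    (σ : K → F → ℝ≥0 → PathR d → Fin d → Fin r → ℝ)
    (k : K) (t : ℝ≥0) (ω : PathR d) : Set (ProbabilityMeasure (PathR d)) :=
  {P | (P : Measure (PathR d)) {ω' : PathR d | ∀ s : ℝ≥0, s ≤ t → ω' s = ω s} = 1 ∧
    ∃ (β : ℝ≥0 → PathR d → Ed d) (a : ℝ≥0 → PathR d → Fin d → Fin d → ℝ),
      IsACSemimartingaleWith t β a (P : Measure (PathR d)) ∧
      ∀ᵐ p ∂(lebNN.prod (P : Measure (PathR d))),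
        (β p.1 p.2, a p.1 p.2) ∈ Theta b σ k (p.1 + t) p.2}

/-- The extended value function `v(k,t,ω) = sup_{P ∈ 𝒞(k,t,ω)} E^P[ψ(k,t,X)]`. -/
def vFun {d r : ℕ} {K F : Type*}
    (b : K → F → ℝ≥0 → PathR d → Ed d)
    (σ : K → F → ℝ≥0 → PathR d → Fin d → Fin r → ℝ)
    (ψ : K → ℝ≥0 → PathR d → ℝ) (k : K) (t : ℝ≥0) (ω : PathR d) : ℝ :=
  ⨆ P ∈ CC b σ k t ω, ∫ x, ψ k t x ∂(P : ProbabilityMeasure (PathR d))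

/-- Non-anticipativity: the value at time `t` depends on the path only through its values
at times `s < t` (together with Borel measurability this characterises predictability). -/
def NonAnticipative {d : ℕ} {E' : Type*} (g : ℝ≥0 → PathR d → E') : Prop :=
  ∀ (t : ℝ≥0) (ω α : PathR d), (∀ s < t, ω s = α s) → g t ω = g t α

/-- Condition 3.1. -/
def Condition31 {d r : ℕ} {K F : Type*} [TopologicalSpace K] [TopologicalSpace F]
    (b : K → F → ℝ≥0 → PathR d → Ed d)
    (σ : K → F → ℝ≥0 → PathR d → Fin d → Fin r → ℝ) : Prop :=
  (FirstCountableTopology K ∧ CompactSpace F ∧ TopologicalSpace.MetrizableSpace F) ∧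
  (Continuous fun p : K × F × ℝ≥0 × PathR d => b p.1 p.2.1 p.2.2.1 p.2.2.2) ∧
  (Continuous fun p : K × F × ℝ≥0 × PathR d => σ p.1 p.2.1 p.2.2.1 p.2.2.2) ∧
  (∀ (k : K) (t : ℝ≥0) (ω : PathR d), Convex ℝ (Theta b σ k t ω)) ∧
  (∀ T : ℝ≥0, 0 < T → ∀ G : Set K, IsCompact G → ∃ C > 0, ∀ k ∈ G, ∀ (f : F) (t : ℝ≥0),
    t ≤ T → ∀ ω : PathR d,
      ‖b k f t ω‖ + ‖σ k f t ω‖ ≤ C * (1 + ⨆ s : Set.Icc (0 : ℝ≥0) t, ‖ω s‖)) ∧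
  (∀ (k : K) (T : ℝ≥0), 0 < T → ∃ C > 0, ∀ (f : F) (t : ℝ≥0), t ≤ T → ∀ ω α : PathR d,
    (⨆ s : Set.Icc (0 : ℝ≥0) t, ‖ω s‖) ≤ (T : ℝ) → (⨆ s : Set.Icc (0 : ℝ≥0) t, ‖α s‖) ≤ (T : ℝ) →
    ‖b k f t ω - b k f t α‖ ≤ C * (⨆ s : Set.Icc (0 : ℝ≥0) t, ‖ω s - α s‖) ∧
    ‖σ k f t ω - σ k f t α‖ ≤ C * (⨆ s : Set.Icc (0 : ℝ≥0) t, ‖ω s - α s‖))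

/-- The concatenation `ω ⊗̃_t ω' = ω 𝟙_{[0,t)} + (ω(t) + ω'(· - t) - ω'(0)) 𝟙_{[t,∞)}`. -/
def concat {d : ℕ} (ω α : PathR d) (t : ℝ≥0) : PathR d :=
  ⟨fun s => if s < t then ω s else ω t + α (s - t) - α 0, by
    have hrw : (fun s : ℝ≥0 => if t ≤ s then ω t + α (s - t) - α 0 else ω s) =
        (fun s : ℝ≥0 => if s < t then ω s else ω t + α (s - t) - α 0) := by
      funext s
      rcases lt_or_ge s t with h | h
      · rw [if_pos h, if_neg (not_le.mpr h)]
      · rw [if_neg (not_lt.mpr h), if_pos h]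
    rw [← hrw]
    refine Continuous.if_le ?_ ω.continuous continuous_const continuous_id fun s hs => ?_
    · exact (continuous_const.add (α.continuous.comp (by fun_prop))).sub continuous_const
    · rw [← hs]; simp⟩

/-- The set `ℛ(k,t,ω)` of laws of continuous semimartingales (after time `0`) starting in
`δ_{ω(t)}` whose absolutely continuous differential characteristics take values in
`Θ(k, ·+t, ω ⊗̃_t X)`, `(λ ⊗ P)`-a.e. -/
def RR {d r : ℕ} {K F : Type*}
    (b : K → F → ℝ≥0 → PathR d → Ed d)
    (σ : K → F → ℝ≥0 → PathR d → Fin d → Fin r → ℝ)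
    (k : K) (t : ℝ≥0) (ω : PathR d) : Set (ProbabilityMeasure (PathR d)) :=
  {P | (P : Measure (PathR d)).map (fun ω' : PathR d => ω' 0) = Measure.dirac (ω t) ∧
    ∃ (β : ℝ≥0 → PathR d → Ed d) (a : ℝ≥0 → PathR d → Fin d → Fin d → ℝ),
      IsACSemimartingaleWith 0 β a (P : Measure (PathR d)) ∧
      ∀ᵐ p ∂(lebNN.prod (P : Measure (PathR d))),
        (β p.1 p.2, a p.1 p.2) ∈ Theta b σ k (p.1 + t) (concat ω p.2 t)}


/-! ### Auxiliary definitions and lemmas -/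

section Aux

variable {d : ℕ}

/-- The shift map `S ω' = ω'(· + t)`. -/
def shiftS (d : ℕ) (t : ℝ≥0) : PathR d → PathR d :=
  fun x => x.comp ⟨fun s => s + t, by fun_prop⟩

lemma shiftS_apply (t : ℝ≥0) (x : PathR d) (s : ℝ≥0) : shiftS d t x s = x (s + t) := rfl

lemma continuous_shiftS (t : ℝ≥0) : Continuous (shiftS d t) :=
  ContinuousMap.continuous_precomp _

lemma measurable_shiftS (t : ℝ≥0) : Measurable (shiftS d t) :=
  (continuous_shiftS t).measurable

lemma measurable_eval (u : ℝ≥0) : Measurable (fun x : PathR d => x u) :=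
  (continuous_eval_const u).measurable

lemma concat_apply (ω α : PathR d) (t s : ℝ≥0) :
    concat ω α t s = if s < t then ω s else ω t + α (s - t) - α 0 := rfl

lemma continuous_concat (ω : PathR d) (t : ℝ≥0) :
    Continuous (fun α : PathR d => concat ω α t) := by
  have hG : Continuous (fun p : PathR d × ℝ≥0 =>
      if t ≤ p.2 then ω t + p.1 (p.2 - t) - p.1 0 else ω p.2) := by
    refine Continuous.if_le ?_ ?_ continuous_const continuous_snd ?_
    · have hsub : Continuous (fun p : PathR d × ℝ≥0 => p.2 - t) :=
        continuous_snd.sub continuous_const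
      have h1 : Continuous (fun p : PathR d × ℝ≥0 => p.1 (p.2 - t)) :=
        continuous_eval.comp (continuous_fst.prodMk hsub)
      have h0 : Continuous (fun p : PathR d × ℝ≥0 => p.1 0) :=
        continuous_eval.comp (continuous_fst.prodMk continuous_const)
      exact (continuous_const.add h1).sub h0
    · exact (map_continuous ω).comp continuous_snd
    · intro p hp
      rw [← hp]
      simp
  have hGc : Continuous (fun α : PathR d =>
      (⟨_, hG⟩ : C(PathR d × ℝ≥0, Ed d)).curry α) := (map_continuous _)
  have : (fun α : PathR d => concat ω α t)
      = fun α : PathR d => (⟨_, hG⟩ : C(PathR d × ℝ≥0, Ed d)).curry α := by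
    funext α
    refine ContinuousMap.ext fun s => ?_
    rw [ContinuousMap.curry_apply, concat_apply]
    show _ = if t ≤ s then ω t + α (s - t) - α 0 else ω s
    rcases lt_or_ge s t with h | h
    · rw [if_pos h, if_neg (not_le.mpr h)]
    · rw [if_neg (not_lt.mpr h), if_pos h]
  rw [this]
  exact hGc

lemma measurable_concat (ω : PathR d) (t : ℝ≥0) :
    Measurable (fun α : PathR d => concat ω α t) :=
  (continuous_concat ω t).measurable

lemma concat_apply_of_le (ω α : PathR d) {t s : ℝ≥0} (h : t ≤ s) :
    concat ω α t s = ω t + α (s - t) - α 0 := by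
  rw [concat_apply, if_neg (not_lt.mpr h)]

lemma concat_apply_add (ω α : PathR d) (t s : ℝ≥0) :
    concat ω α t (s + t) = ω t + α s - α 0 := by
  rw [concat_apply_of_le ω α (le_add_self : t ≤ s + t), add_tsub_cancel_right]

lemma concat_apply_self (ω α : PathR d) (t : ℝ≥0) :
    concat ω α t t = ω t := by
  rw [concat_apply_of_le ω α le_rfl, tsub_self]
  abel


/-- `lebNN` is sigma-finite. -/
instance : SigmaFinite lebNN := by
  have hemb : MeasurableEmbedding ((↑) : ℝ≥0 → ℝ) :=
    (Isometry.isClosedEmbedding (fun _ _ => rfl : Isometry ((↑) : ℝ≥0 → ℝ))).measurableEmbedding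
  refine ⟨⟨⟨fun n => Set.Iic (n : ℝ≥0), fun _ => trivial, fun n => ?_, ?_⟩⟩⟩
  · have : lebNN (Set.Iic (n : ℝ≥0)) = volume (((↑) : ℝ≥0 → ℝ) '' Set.Iic (n : ℝ≥0)) :=
      Measure.comap_apply _ NNReal.coe_injective
        (fun s hs => hemb.measurableSet_image.2 hs) _ measurableSet_Iic
    rw [this]
    have himg : ((↑) : ℝ≥0 → ℝ) '' Set.Iic (n : ℝ≥0) ⊆ Set.Icc (0 : ℝ) n := by
      rintro x ⟨y, hy, rfl⟩
      exact ⟨y.coe_nonneg, NNReal.coe_le_coe.2 hy⟩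
    exact lt_of_le_of_lt (measure_mono himg) (by simp)
  · refine Set.eq_univ_of_forall fun x => ?_
    obtain ⟨n, hn⟩ := exists_nat_ge x
    exact Set.mem_iUnion.2 ⟨n, hn⟩

/-- The set of paths agreeing with `ω` up to time `t`. -/
def agreeSet (ω : PathR d) (t : ℝ≥0) : Set (PathR d) :=
  {x : PathR d | ∀ s : ℝ≥0, s ≤ t → x s = ω s}

lemma measurableSet_eq_eval (ω : PathR d) (u : ℝ≥0) :
    MeasurableSet {x : PathR d | x u = ω u} :=
  (measurable_eval u) (measurableSet_singleton (ω u))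

lemma agreeSet_eq (ω : PathR d) (t : ℝ≥0) :
    agreeSet ω t = {x : PathR d | x t = ω t} ∩
      ⋂ q : ℚ, {x : PathR d | Real.toNNReal q ≤ t → x (Real.toNNReal q) = ω (Real.toNNReal q)} := by
  ext x
  constructor
  · intro hx
    exact ⟨hx t le_rfl, Set.mem_iInter.2 fun q hq => hx _ hq⟩
  · rintro ⟨hxt, hxq⟩ s hs
    rcases eq_or_lt_of_le hs with rfl | hst
    · exact hxt
    · -- use density of rationals
      have hC : IsClosed {u : ℝ≥0 | x u = ω u} :=
        isClosed_eq (map_continuous x) (map_continuous ω)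
      have hmem : s ∈ closure {u : ℝ≥0 | x u = ω u} := by
        rw [Metric.mem_closure_iff]
        intro ε hε
        have hlt : (s : ℝ) < min ((s : ℝ) + ε) (t : ℝ) :=
          lt_min (by linarith) (by exact_mod_cast hst)
        obtain ⟨q, hq1, hq2⟩ := exists_rat_btwn hlt
        have hq0 : (0 : ℝ) ≤ (q : ℝ) := le_trans s.coe_nonneg hq1.le
        have hqt : Real.toNNReal q ≤ t := by
          rw [Real.toNNReal_le_iff_le_coe]
          exact (lt_min_iff.1 hq2).2.le
        refine ⟨Real.toNNReal q, Set.mem_iInter.1 hxq q hqt, ?_⟩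
        rw [NNReal.dist_eq, Real.coe_toNNReal _ hq0]
        rw [abs_sub_lt_iff]
        constructor
        · linarith
        · have := (lt_min_iff.1 hq2).1
          linarith
      rw [hC.closure_eq] at hmem
      exact hmem
  
lemma measurableSet_agreeSet (ω : PathR d) (t : ℝ≥0) :
    MeasurableSet (agreeSet ω t) := by
  rw [agreeSet_eq]
  refine (measurableSet_eq_eval ω t).inter (MeasurableSet.iInter fun q => ?_)
  by_cases hq : Real.toNNReal q ≤ t
  · simp only [hq, forall_true_left]
    exact measurableSet_eq_eval ω _
  · simp only [hq, false_implies]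
    exact MeasurableSet.univ

lemma concat_shiftS_of_agree {ω x : PathR d} {t : ℝ≥0} (hx : x ∈ agreeSet ω t) :
    concat ω (shiftS d t x) t = x := by
  refine ContinuousMap.ext fun s => ?_
  rcases lt_or_ge s t with h | h
  · rw [concat_apply, if_pos h]
    exact (hx s h.le).symm
  · rw [concat_apply_of_le ω _ h, shiftS_apply, shiftS_apply, tsub_add_cancel_of_le h,
      zero_add, hx t le_rfl]
    abel

lemma shiftS_concat_of_eq {ω α : PathR d} {t : ℝ≥0} (hα : α 0 = ω t) :
    shiftS d t (concat ω α t) = α := by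
  refine ContinuousMap.ext fun s => ?_
  rw [shiftS_apply, concat_apply_add, hα]
  abel

lemma concat_mem_agreeSet (ω α : PathR d) (t : ℝ≥0) :
    concat ω α t ∈ agreeSet ω t := by
  intro s hs
  rcases lt_or_eq_of_le hs with h | rfl
  · rw [concat_apply, if_pos h]
  · exact concat_apply_self ω α s

end Aux

section Mart

variable {d : ℕ}

lemma martingale_of_setIntegral_eq' {Ω' : Type*} {m : MeasurableSpace Ω'} {μ : Measure Ω'}
    [IsFiniteMeasure μ] {ℱ : Filtration ℝ≥0 m} {f : ℝ≥0 → Ω' → ℝ}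
    (hadp : StronglyAdapted ℱ f) (hint : ∀ i, Integrable (f i) μ)
    (h : ∀ i j : ℝ≥0, i ≤ j → ∀ s : Set Ω', MeasurableSet[ℱ i] s →
      ∫ x in s, f i x ∂μ = ∫ x in s, f j x ∂μ) : Martingale f ℱ μ := by
  refine martingale_iff.2 ⟨?_, submartingale_of_setIntegral_le hadp hint
    (fun i j hij s hs => (h i j hij s hs).le)⟩
  have hneg : Submartingale (-f) ℱ μ := by
    refine submartingale_of_setIntegral_le (fun i => (hadp i).neg) (fun i => (hint i).neg)
      (fun i j hij s hs => ?_)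
    simp only [Pi.neg_apply, integral_neg]
    exact neg_le_neg (h i j hij s hs).ge
  simpa using hneg.neg

lemma martingale_map {S T : PathR d → PathR d}
    (hSm : Measurable S) (hTm : Measurable T)
    {ℱ 𝒢 : Filtration ℝ≥0 (pathRMeasurableSpace d)}
    (hS : ∀ s : ℝ≥0, @Measurable _ _ (ℱ s) (𝒢 s) S)
    (hT : ∀ s : ℝ≥0, @Measurable _ _ (𝒢 s) (ℱ s) T)
    {P : Measure (PathR d)} [IsProbabilityMeasure P]
    (hid : ∀ᵐ x ∂P, T (S x) = x)
    {M : ℝ≥0 → PathR d → ℝ} (hM : Martingale M ℱ P) :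
    Martingale (fun s α => M s (T α)) 𝒢 (P.map S) := by
  haveI : IsProbabilityMeasure (P.map S) := Measure.isProbabilityMeasure_map hSm.aemeasurable
  have hSMs : ∀ j : ℝ≥0, StronglyMeasurable (M j) :=
    fun j => (hM.stronglyAdapted j).mono (ℱ.le j)
  have hAESM : ∀ j : ℝ≥0, AEStronglyMeasurable (fun α => M j (T α)) (P.map S) :=
    fun j => ((hSMs j).comp_measurable hTm).aestronglyMeasurable
  have hint : ∀ j : ℝ≥0, Integrable (fun α => M j (T α)) (P.map S) := by
    intro j
    rw [integrable_map_measure (hAESM j) hSm.aemeasurable]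
    exact (hM.integrable j).congr (hid.mono fun x hx => (congrArg (M j) hx).symm)
  refine martingale_of_setIntegral_eq'
    (fun s => (hM.stronglyAdapted s).comp_measurable (hT s)) hint (fun i j hij A hA => ?_)
  have hAm : MeasurableSet A := 𝒢.le i A hA
  rw [setIntegral_map hAm (hAESM i) hSm.aemeasurable,
      setIntegral_map hAm (hAESM j) hSm.aemeasurable]
  have hres : ∀ k : ℝ≥0, ∫ x in S ⁻¹' A, M k (T (S x)) ∂P = ∫ x in S ⁻¹' A, M k x ∂P := by
    intro k
    exact integral_congr_ae (ae_restrict_of_ae (hid.mono fun x hx => congrArg (M k) hx))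
  rw [hres i, hres j]
  exact hM.setIntegral_eq hij ((hS i) hA)

lemma isLocalMartingale_map {S T : PathR d → PathR d}
    (hSm : Measurable S) (hTm : Measurable T)
    {ℱ 𝒢 : Filtration ℝ≥0 (pathRMeasurableSpace d)}
    (hS : ∀ s : ℝ≥0, @Measurable _ _ (ℱ s) (𝒢 s) S)
    (hT : ∀ s : ℝ≥0, @Measurable _ _ (𝒢 s) (ℱ s) T)
    {P : Measure (PathR d)} [IsProbabilityMeasure P]
    (hid : ∀ᵐ x ∂P, T (S x) = x)
    {M : ℝ≥0 → PathR d → ℝ} (hM : IsLocalMartingale ℱ M P) :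
    IsLocalMartingale 𝒢 (fun s α => M s (T α)) (P.map S) := by
  obtain ⟨τ, hstop, hmono, htend, hmart⟩ := hM
  refine ⟨fun n α => τ n (T α), fun n i => (hT i) (hstop n i), fun n α => hmono n (T α), ?_, ?_⟩
  · rw [ae_iff]
    set N := {x : PathR d | ¬ Tendsto (fun n => τ n x) atTop atTop} with hN
    have heq : {α : PathR d | ¬ Tendsto (fun n => τ n (T α)) atTop atTop} = T ⁻¹' N := rfl
    rw [heq]
    refine le_antisymm ?_ (zero_le)
    calc P.map S (T ⁻¹' N) ≤ (P.map S).map T N := Measure.le_map_apply hTm.aemeasurable N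
      _ = P.map (T ∘ S) N := by rw [Measure.map_map hTm hSm]
      _ = P.map id N := by rw [Measure.map_congr (μ := P) (f := T ∘ S) (g := id) hid]
      _ = P N := by rw [Measure.map_id]
      _ = 0 := ae_iff.1 htend
  · intro n
    have hsp : stoppedProcess (fun s α => M s (T α)) (fun α => τ n (T α))
        = fun s α => stoppedProcess M (fun ω => ((τ n ω : ℝ≥0) : WithTop ℝ≥0)) s (T α) := rfl
    rw [hsp]
    exact martingale_map hSm hTm hS hT hid (hmart n)

lemma shiftedFiltration_apply (t s : ℝ≥0) :
    shiftedFiltration d t s = ⨅ (r : ℝ≥0) (_ : s < r), ⨆ (u : ℝ≥0) (_ : u ≤ r),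
      MeasurableSpace.comap (fun x : PathR d => x (u + t))
        (inferInstance : MeasurableSpace (Ed d)) := rfl

lemma measurable_shiftS_filtration (t s : ℝ≥0) :
    @Measurable _ _ (shiftedFiltration d t s) (shiftedFiltration d 0 s) (shiftS d t) := by
  rw [measurable_iff_comap_le, shiftedFiltration_apply, shiftedFiltration_apply]
  refine le_iInf fun r => le_iInf fun hr => ?_
  refine le_trans (MeasurableSpace.comap_mono (iInf_le_of_le r (iInf_le _ hr))) ?_
  rw [MeasurableSpace.comap_iSup]
  refine iSup_le fun u => ?_
  rw [MeasurableSpace.comap_iSup]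
  refine iSup_le fun hu => ?_
  rw [MeasurableSpace.comap_comp]
  have hfun : ((fun x : PathR d => x (u + 0)) ∘ shiftS d t)
      = fun x : PathR d => x (u + t) := by
    funext x
    simp [shiftS_apply]
  rw [hfun]
  exact le_iSup₂ (f := fun (u : ℝ≥0) (_ : u ≤ r) =>
    MeasurableSpace.comap (fun x : PathR d => x (u + t))
      (inferInstance : MeasurableSpace (Ed d))) u hu

lemma measurable_concat_filtration (ω : PathR d) (t s : ℝ≥0) :
    @Measurable _ _ (shiftedFiltration d 0 s) (shiftedFiltration d t s)
      (fun α : PathR d => concat ω α t) := by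
  rw [measurable_iff_comap_le, shiftedFiltration_apply, shiftedFiltration_apply]
  refine le_iInf fun r => le_iInf fun hr => ?_
  refine le_trans (MeasurableSpace.comap_mono (iInf_le_of_le r (iInf_le _ hr))) ?_
  rw [MeasurableSpace.comap_iSup]
  refine iSup_le fun u => ?_
  rw [MeasurableSpace.comap_iSup]
  refine iSup_le fun hu => ?_
  rw [MeasurableSpace.comap_comp]
  have hfun : ((fun x : PathR d => x (u + t)) ∘ (fun α : PathR d => concat ω α t))
      = fun α : PathR d => ω t + α u - α 0 := by
    funext α
    rw [Function.comp_apply, concat_apply_add]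
  rw [hfun, ← measurable_iff_comap_le]
  set m' : MeasurableSpace (PathR d) := ⨆ (u' : ℝ≥0) (_ : u' ≤ r),
      MeasurableSpace.comap (fun x : PathR d => x (u' + 0))
        (inferInstance : MeasurableSpace (Ed d)) with hm'
  have heval : ∀ u' : ℝ≥0, u' ≤ r → @Measurable _ _ m' _ (fun x : PathR d => x (u' + 0)) := by
    intro u' hu'
    rw [measurable_iff_comap_le]
    exact le_iSup₂ (f := fun (u' : ℝ≥0) (_ : u' ≤ r) =>
      MeasurableSpace.comap (fun x : PathR d => x (u' + 0))
        (inferInstance : MeasurableSpace (Ed d))) u' hu'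
  have h1 : @Measurable _ _ m' _ (fun x : PathR d => x u) := by
    have := heval u hu
    simpa using this
  have h0 : @Measurable _ _ m' _ (fun x : PathR d => x 0) := by
    have := heval 0 (zero_le)
    simpa using this
  exact (measurable_const.add h1).sub h0

end Mart

section Drift

variable {d : ℕ}

lemma drifted_concat (ω : PathR d) (t : ℝ≥0) (β : ℝ≥0 → PathR d → Ed d) (i : Fin d) :
    (fun (s : ℝ≥0) (α : PathR d) => drifted t β i s (concat ω α t))
      = drifted 0 (fun u α => β u (concat ω α t)) i := by
  funext s α
  simp only [drifted, concat_apply_add, concat_apply_self, add_zero]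
  simp only [PiLp.add_apply, PiLp.sub_apply]
  ring

lemma drifted_shiftS (t : ℝ≥0) (β : ℝ≥0 → PathR d → Ed d) (i : Fin d) :
    (fun (s : ℝ≥0) (x : PathR d) => drifted 0 β i s (shiftS d t x))
      = drifted t (fun u x => β u (shiftS d t x)) i := by
  funext s x
  simp only [drifted, shiftS_apply, add_zero, zero_add]

lemma isACSemimartingaleWith_map_shiftS {t : ℝ≥0} {β : ℝ≥0 → PathR d → Ed d}
    {a : ℝ≥0 → PathR d → Fin d → Fin d → ℝ} {P : Measure (PathR d)} [IsProbabilityMeasure P]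
    (ω : PathR d) (hid : ∀ᵐ x ∂P, concat ω (shiftS d t x) t = x)
    (h : IsACSemimartingaleWith t β a P) :
    IsACSemimartingaleWith 0 (fun u α => β u (concat ω α t))
      (fun u α => a u (concat ω α t)) (P.map (shiftS d t)) := by
  obtain ⟨hβ, ha, h1, h2⟩ := h
  have hTm := measurable_concat ω t
  have hSm := measurable_shiftS (d := d) t
  have hidm : Measurable (Prod.map (id : ℝ≥0 → ℝ≥0) (fun α : PathR d => concat ω α t)) :=
    measurable_id.prodMap hTm
  refine ⟨?_, ?_, ?_, ?_⟩
  · exact hβ.comp hidm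
  · exact ha.comp hidm
  · intro i
    rw [← drifted_concat ω t β i]
    exact isLocalMartingale_map hSm hTm (measurable_shiftS_filtration t)
      (fun s => measurable_concat_filtration ω t s) hid (h1 i)
  · intro i j
    have key := isLocalMartingale_map hSm hTm (measurable_shiftS_filtration t)
      (fun s => measurable_concat_filtration ω t s) hid (h2 i j)
    have hfn : (fun (s : ℝ≥0) (α : PathR d) =>
        drifted 0 (fun u α => β u (concat ω α t)) i s α *
          drifted 0 (fun u α => β u (concat ω α t)) j s α -
          ∫ u in Set.Icc (0:ℝ≥0) s, a u (concat ω α t) i j ∂lebNN)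
        = fun (s : ℝ≥0) (α : PathR d) =>
            (fun (s : ℝ≥0) (x : PathR d) => drifted t β i s x * drifted t β j s x -
              ∫ u in Set.Icc (0:ℝ≥0) s, a u x i j ∂lebNN) s (concat ω α t) := by
      funext s α
      simp only [← drifted_concat ω t β i, ← drifted_concat ω t β j]
    rw [hfn]
    exact key

lemma isACSemimartingaleWith_map_concat {t : ℝ≥0} {β : ℝ≥0 → PathR d → Ed d}
    {a : ℝ≥0 → PathR d → Fin d → Fin d → ℝ} {Q : Measure (PathR d)} [IsProbabilityMeasure Q]
    (ω : PathR d) (hid : ∀ᵐ α ∂Q, shiftS d t (concat ω α t) = α)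
    (h : IsACSemimartingaleWith 0 β a Q) :
    IsACSemimartingaleWith t (fun u x => β u (shiftS d t x))
      (fun u x => a u (shiftS d t x)) (Q.map (fun α : PathR d => concat ω α t)) := by
  obtain ⟨hβ, ha, h1, h2⟩ := h
  have hTm := measurable_shiftS (d := d) t
  have hSm := measurable_concat ω t
  have hidm : Measurable (Prod.map (id : ℝ≥0 → ℝ≥0) (shiftS d t)) :=
    measurable_id.prodMap hTm
  refine ⟨?_, ?_, ?_, ?_⟩
  · exact hβ.comp hidm
  · exact ha.comp hidm
  · intro i
    rw [← drifted_shiftS t β i]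
    exact isLocalMartingale_map hSm hTm
      (fun s => measurable_concat_filtration ω t s) (measurable_shiftS_filtration t) hid (h1 i)
  · intro i j
    have key := isLocalMartingale_map hSm hTm
      (fun s => measurable_concat_filtration ω t s) (measurable_shiftS_filtration t) hid (h2 i j)
    have hfn : (fun (s : ℝ≥0) (x : PathR d) =>
        drifted t (fun u x => β u (shiftS d t x)) i s x *
          drifted t (fun u x => β u (shiftS d t x)) j s x -
          ∫ u in Set.Icc (0:ℝ≥0) s, a u (shiftS d t x) i j ∂lebNN)
        = fun (s : ℝ≥0) (x : PathR d) =>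
            (fun (s : ℝ≥0) (α : PathR d) => drifted 0 β i s α * drifted 0 β j s α -
              ∫ u in Set.Icc (0:ℝ≥0) s, a u α i j ∂lebNN) s (shiftS d t x) := by
      funext s x
      simp only [← drifted_shiftS t β i, ← drifted_shiftS t β j]
    rw [hfn]
    exact key

end Drift

section SupTransfer

lemma real_iSup_empty_prop {p : Prop} (hp : ¬ p) (f : p → ℝ) : (⨆ h : p, f h) = 0 := by
  haveI : IsEmpty p := ⟨hp⟩
  exact Real.iSup_of_isEmpty _

lemma iSup_transfer_le {ι κ : Type*} [Nonempty ι] {A : Set ι} {B : Set κ}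
    {f : ι → ℝ} {g : κ → ℝ} {C : ℝ} (hC : 0 ≤ C) (hgC : ∀ j, g j ≤ C)
    (hAB : ∀ i ∈ A, ∃ j ∈ B, g j = f i)
    (hA : (∃ i, i ∉ A) → ∃ j, j ∉ B) :
    (⨆ i ∈ A, f i) ≤ ⨆ j ∈ B, g j := by
  have hbdd : BddAbove (Set.range fun j => ⨆ _ : j ∈ B, g j) := by
    refine ⟨C, ?_⟩
    rintro x ⟨j, rfl⟩
    exact Real.iSup_le (fun _ => hgC j) hC
  refine ciSup_le fun i => ?_
  by_cases hi : i ∈ A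
  · haveI : Nonempty (i ∈ A) := ⟨hi⟩
    rw [ciSup_const]
    obtain ⟨j, hj, hgf⟩ := hAB i hi
    have h1 : (⨆ _ : j ∈ B, g j) ≤ ⨆ j ∈ B, g j := le_ciSup hbdd j
    haveI : Nonempty (j ∈ B) := ⟨hj⟩
    rw [ciSup_const] at h1
    rw [← hgf]
    exact h1
  · rw [real_iSup_empty_prop hi]
    obtain ⟨j, hj⟩ := hA ⟨i, hi⟩
    have h1 : (⨆ _ : j ∈ B, g j) ≤ ⨆ j ∈ B, g j := le_ciSup hbdd j
    rw [real_iSup_empty_prop hj] at h1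
    exact h1

lemma integral_abs_le_of_bound {X : Type*} [MeasurableSpace X] (P : Measure X)
    [IsProbabilityMeasure P] (h : X → ℝ) (C : ℝ) (hb : ∀ x, |h x| ≤ C) :
    ∫ x, h x ∂P ≤ C := by
  have h1 : ‖∫ x, h x ∂P‖ ≤ C * (P Set.univ).toReal :=
    norm_integral_le_of_norm_le_const (Filter.Eventually.of_forall fun x => by
      simpa [Real.norm_eq_abs] using hb x)
  rw [measure_univ, ENNReal.toReal_one, mul_one] at h1
  exact le_trans (le_abs_self _) (by simpa [Real.norm_eq_abs] using h1)

end SupTransfer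

section MainLemmas

variable {d r : ℕ} {K F : Type*} [TopologicalSpace K]

lemma CC_to_RR
    (b : K → F → ℝ≥0 → PathR d → Ed d)
    (σ : K → F → ℝ≥0 → PathR d → Fin d → Fin r → ℝ)
    (k : K) (t : ℝ≥0) (ω : PathR d)
    (ψ : K → ℝ≥0 → PathR d → ℝ)
    (hψc : Continuous fun p : K × ℝ≥0 × PathR d => ψ p.1 p.2.1 p.2.2)
    (P : ProbabilityMeasure (PathR d)) (hP : P ∈ CC b σ k t ω) :
    ∃ Q ∈ RR b σ k t ω,
      ∫ x, ψ k t (concat ω x t) ∂(Q : Measure (PathR d))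
        = ∫ x, ψ k t x ∂(P : Measure (PathR d)) := by
  obtain ⟨hP1, β, a, hsemi, hae⟩ := hP
  set P' : Measure (PathR d) := ↑P with hP'def
  have hEm := measurableSet_agreeSet ω t
  have hE1 : P' (agreeSet ω t) = 1 := hP1
  have hEc : P' (agreeSet ω t)ᶜ = 0 := by
    rw [measure_compl hEm (measure_ne_top _ _), hE1, measure_univ, tsub_self]
  have hEae : ∀ᵐ x ∂P', x ∈ agreeSet ω t := by
    rw [ae_iff]
    exact hEc
  have hid : ∀ᵐ x ∂P', concat ω (shiftS d t x) t = x :=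
    hEae.mono fun x hx => concat_shiftS_of_agree hx
  have hSm := measurable_shiftS (d := d) t
  have hTm := measurable_concat ω t
  haveI : IsProbabilityMeasure (P'.map (shiftS d t)) :=
    Measure.isProbabilityMeasure_map hSm.aemeasurable
  have hψcont : Continuous (fun x : PathR d => ψ k t (concat ω x t)) :=
    hψc.comp (continuous_const.prodMk (continuous_const.prodMk (continuous_concat ω t)))
  refine ⟨⟨P'.map (shiftS d t), inferInstance⟩, ⟨?_, ?_⟩, ?_⟩
  · -- initial law is `δ_{ω t}`
    show (P'.map (shiftS d t)).map (fun x : PathR d => x 0) = Measure.dirac (ω t)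
    rw [Measure.map_map (measurable_eval 0) hSm]
    have h1 : ((fun x : PathR d => x 0) ∘ shiftS d t) = fun x : PathR d => x (0 + t) := rfl
    rw [h1]
    have h2 : P'.map (fun x : PathR d => x (0 + t))
        = P'.map (fun _ : PathR d => ω t) := by
      refine Measure.map_congr (hEae.mono fun x hx => ?_)
      show x (0 + t) = ω t
      rw [zero_add]
      exact hx t le_rfl
    rw [h2, Measure.map_const, measure_univ, one_smul]
  · -- characteristics
    refine ⟨fun u α => β u (concat ω α t), fun u α => a u (concat ω α t),
      isACSemimartingaleWith_map_shiftS ω hid hsemi, ?_⟩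
    rw [ae_iff]
    set N : Set (ℝ≥0 × PathR d) :=
      {p | ¬ (β p.1 p.2, a p.1 p.2) ∈ Theta b σ k (p.1 + t) p.2} with hN
    have hNnull : (lebNN.prod P') N = 0 := ae_iff.1 hae
    have hsub : {p : ℝ≥0 × PathR d |
        ¬ ((fun u α => β u (concat ω α t)) p.1 p.2, (fun u α => a u (concat ω α t)) p.1 p.2)
          ∈ Theta b σ k (p.1 + t) (concat ω p.2 t)}
        = Prod.map id (fun α : PathR d => concat ω α t) ⁻¹' N := rfl
    rw [hsub]
    refine le_antisymm ?_ (zero_le)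
    calc (lebNN.prod (P'.map (shiftS d t)))
          (Prod.map id (fun α : PathR d => concat ω α t) ⁻¹' N)
        ≤ ((lebNN.prod (P'.map (shiftS d t))).map
            (Prod.map id (fun α : PathR d => concat ω α t))) N :=
          Measure.le_map_apply (measurable_id.prodMap hTm).aemeasurable N
      _ = ((lebNN.map id).prod
            ((P'.map (shiftS d t)).map (fun α : PathR d => concat ω α t))) N := by
          rw [Measure.map_prod_map _ _ measurable_id hTm]
      _ = (lebNN.prod P') N := by
          rw [Measure.map_id, Measure.map_map hTm hSm,
            Measure.map_congr (μ := P')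
              (f := (fun α : PathR d => concat ω α t) ∘ shiftS d t) (g := id) hid,
            Measure.map_id]
      _ = 0 := hNnull
  · -- value of the integral
    show ∫ x, ψ k t (concat ω x t) ∂(P'.map (shiftS d t)) = ∫ x, ψ k t x ∂P'
    rw [integral_map hSm.aemeasurable hψcont.aestronglyMeasurable]
    exact integral_congr_ae (hid.mono fun x hx => congrArg (ψ k t) hx)

lemma RR_to_CC
    (b : K → F → ℝ≥0 → PathR d → Ed d)
    (σ : K → F → ℝ≥0 → PathR d → Fin d → Fin r → ℝ)
    (k : K) (t : ℝ≥0) (ω : PathR d)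
    (ψ : K → ℝ≥0 → PathR d → ℝ)
    (hψc : Continuous fun p : K × ℝ≥0 × PathR d => ψ p.1 p.2.1 p.2.2)
    (Q : ProbabilityMeasure (PathR d)) (hQ : Q ∈ RR b σ k t ω) :
    ∃ P ∈ CC b σ k t ω,
      ∫ x, ψ k t x ∂(P : Measure (PathR d))
        = ∫ x, ψ k t (concat ω x t) ∂(Q : Measure (PathR d)) := by
  obtain ⟨hQ1, β, a, hsemi, hae⟩ := hQ
  set Q' : Measure (PathR d) := ↑Q with hQ'def
  have hSm := measurable_shiftS (d := d) t
  have hTm := measurable_concat ω t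
  have h0 : ∀ᵐ α ∂Q', α 0 = ω t := by
    rw [ae_iff]
    have hset : {α : PathR d | ¬ α 0 = ω t} = (fun α : PathR d => α 0) ⁻¹' ({ω t}ᶜ) := rfl
    rw [hset, ← Measure.map_apply (measurable_eval 0) (measurableSet_singleton (ω t)).compl,
      hQ1]
    simp
  have hid : ∀ᵐ α ∂Q', shiftS d t (concat ω α t) = α :=
    h0.mono fun α hα => shiftS_concat_of_eq hα
  haveI : IsProbabilityMeasure (Q'.map (fun α : PathR d => concat ω α t)) :=
    Measure.isProbabilityMeasure_map hTm.aemeasurable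
  have hEm := measurableSet_agreeSet ω t
  have hψcont : Continuous (fun x : PathR d => ψ k t (concat ω x t)) :=
    hψc.comp (continuous_const.prodMk (continuous_const.prodMk (continuous_concat ω t)))
  have hψcont' : Continuous (fun x : PathR d => ψ k t x) :=
    hψc.comp (continuous_const.prodMk (continuous_const.prodMk continuous_id))
  refine ⟨⟨Q'.map (fun α : PathR d => concat ω α t), inferInstance⟩, ⟨?_, ?_⟩, ?_⟩
  · -- agrees with ω on [0, t]
    show (Q'.map (fun α : PathR d => concat ω α t)) (agreeSet ω t) = 1
    rw [Measure.map_apply hTm hEm]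
    have : (fun α : PathR d => concat ω α t) ⁻¹' (agreeSet ω t) = Set.univ :=
      Set.eq_univ_of_forall fun α => concat_mem_agreeSet ω α t
    rw [this, measure_univ]
  · -- characteristics
    refine ⟨fun u x => β u (shiftS d t x), fun u x => a u (shiftS d t x),
      isACSemimartingaleWith_map_concat ω hid hsemi, ?_⟩
    rw [ae_iff]
    set NQ : Set (ℝ≥0 × PathR d) :=
      {p | ¬ (β p.1 p.2, a p.1 p.2) ∈ Theta b σ k (p.1 + t) (concat ω p.2 t)} with hNQ
    have hNQnull : (lebNN.prod Q') NQ = 0 := ae_iff.1 hae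
    set Ebad : Set (PathR d) := {x | ¬ concat ω (shiftS d t x) t = x} with hEbad
    have hEbadm : MeasurableSet Ebad := by
      have : IsClosed {x : PathR d | concat ω (shiftS d t x) t = x} :=
        isClosed_eq ((continuous_concat ω t).comp (continuous_shiftS t)) continuous_id
      exact this.measurableSet.compl
    have hbadnull : (Q'.map (fun α : PathR d => concat ω α t)) Ebad = 0 := by
      rw [Measure.map_apply hTm hEbadm]
      refine le_antisymm (le_trans (measure_mono ?_) (le_of_eq (ae_iff.1 hid))) (zero_le)
      intro α hα
      show ¬ shiftS d t (concat ω α t) = α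
      intro hc
      apply hα
      show concat ω (shiftS d t (concat ω α t)) t = concat ω α t
      rw [hc]
    have hsub : {p : ℝ≥0 × PathR d |
        ¬ ((fun u x => β u (shiftS d t x)) p.1 p.2, (fun u x => a u (shiftS d t x)) p.1 p.2)
          ∈ Theta b σ k (p.1 + t) p.2}
        ⊆ (Prod.map id (shiftS d t) ⁻¹' NQ) ∪ (Set.univ ×ˢ Ebad) := by
      rintro ⟨u, x⟩ hp
      by_cases hx : concat ω (shiftS d t x) t = x
      · left
        show ¬ (β u (shiftS d t x), a u (shiftS d t x))
          ∈ Theta b σ k (u + t) (concat ω (shiftS d t x) t)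
        rw [hx]
        exact hp
      · right
        exact ⟨trivial, hx⟩
    refine le_antisymm (le_trans (measure_mono hsub) ?_) (zero_le)
    refine le_trans (measure_union_le _ _) ?_
    have hterm1 : (lebNN.prod (Q'.map (fun α : PathR d => concat ω α t)))
        (Prod.map id (shiftS d t) ⁻¹' NQ) = 0 := by
      refine le_antisymm ?_ (zero_le)
      calc (lebNN.prod (Q'.map (fun α : PathR d => concat ω α t)))
            (Prod.map id (shiftS d t) ⁻¹' NQ)
          ≤ ((lebNN.prod (Q'.map (fun α : PathR d => concat ω α t))).map
              (Prod.map id (shiftS d t))) NQ :=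
            Measure.le_map_apply (measurable_id.prodMap hSm).aemeasurable NQ
        _ = ((lebNN.map id).prod
              ((Q'.map (fun α : PathR d => concat ω α t)).map (shiftS d t))) NQ := by
            rw [Measure.map_prod_map _ _ measurable_id hSm]
        _ = (lebNN.prod Q') NQ := by
            rw [Measure.map_id, Measure.map_map hSm hTm,
              Measure.map_congr (μ := Q')
                (f := shiftS d t ∘ fun α : PathR d => concat ω α t) (g := id) hid,
              Measure.map_id]
        _ = 0 := hNQnull
    have hterm2 : (lebNN.prod (Q'.map (fun α : PathR d => concat ω α t)))
        (Set.univ ×ˢ Ebad) = 0 := by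
      rw [Measure.prod_prod, hbadnull, mul_zero]
    have hzero : (lebNN.prod (Q'.map (fun α : PathR d => concat ω α t)))
          (Prod.map id (shiftS d t) ⁻¹' NQ)
        + (lebNN.prod (Q'.map (fun α : PathR d => concat ω α t)))
          (Set.univ ×ˢ Ebad) = 0 := by
      rw [hterm1, hterm2, add_zero]
    exact le_of_eq hzero
  · -- value of the integral
    show ∫ x, ψ k t x ∂(Q'.map (fun α : PathR d => concat ω α t))
      = ∫ x, ψ k t (concat ω x t) ∂Q'
    rw [integral_map hTm.aemeasurable hψcont'.aestronglyMeasurable]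


lemma exists_not_mem_RR_of_pos (hd : 0 < d)
    (b : K → F → ℝ≥0 → PathR d → Ed d)
    (σ : K → F → ℝ≥0 → PathR d → Fin d → Fin r → ℝ)
    (k : K) (t : ℝ≥0) (ω : PathR d) :
    ∃ Q : ProbabilityMeasure (PathR d), Q ∉ RR b σ k t ω := by
  set c : Ed d := EuclideanSpace.single ⟨0, hd⟩ 1 with hc
  have hcne : c ≠ 0 := by
    intro h
    have := congrArg (fun v : Ed d => v ⟨0, hd⟩) h
    rw [hc] at this
    simp [EuclideanSpace.single_apply] at this
  set pth : PathR d := ContinuousMap.const ℝ≥0 (ω t + c) with hpth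
  refine ⟨⟨Measure.dirac pth, inferInstance⟩, fun hmem => ?_⟩
  obtain ⟨h1, -⟩ := hmem
  have h1' : (Measure.dirac pth).map (fun x : PathR d => x 0) = Measure.dirac (ω t) := h1
  rw [Measure.map_dirac' (measurable_eval 0)] at h1'
  have hne : pth 0 ≠ ω t := by
    show ω t + c ≠ ω t
    intro h
    exact hcne (by simpa using congrArg (fun z => z - ω t) h)
  have h2 : (Measure.dirac (pth 0) : Measure (Ed d)) {ω t}
      = (Measure.dirac (ω t) : Measure (Ed d)) {ω t} := by rw [h1']
  rw [Measure.dirac_apply' _ (measurableSet_singleton _),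
    Measure.dirac_apply' _ (measurableSet_singleton _)] at h2
  simp [hne] at h2

lemma exists_not_mem_CC_of_pos (hd : 0 < d)
    (b : K → F → ℝ≥0 → PathR d → Ed d)
    (σ : K → F → ℝ≥0 → PathR d → Fin d → Fin r → ℝ)
    (k : K) (t : ℝ≥0) (ω : PathR d) :
    ∃ P : ProbabilityMeasure (PathR d), P ∉ CC b σ k t ω := by
  set c : Ed d := EuclideanSpace.single ⟨0, hd⟩ 1 with hc
  have hcne : c ≠ 0 := by
    intro h
    have := congrArg (fun v : Ed d => v ⟨0, hd⟩) h
    rw [hc] at this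
    simp [EuclideanSpace.single_apply] at this
  set pth : PathR d := ContinuousMap.const ℝ≥0 (ω 0 + c) with hpth
  refine ⟨⟨Measure.dirac pth, inferInstance⟩, fun hmem => ?_⟩
  obtain ⟨h1, -⟩ := hmem
  have h1' : (Measure.dirac pth) (agreeSet ω t) = 1 := h1
  rw [Measure.dirac_apply' _ (measurableSet_agreeSet ω t)] at h1'
  have hne : pth ∉ agreeSet ω t := by
    intro h
    have h0 := h 0 (zero_le)
    show False
    apply hcne
    have : ω 0 + c = ω 0 := h0
    simpa using congrArg (fun z => z - ω 0) this
  simp [Set.indicator_of_notMem hne] at h1'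

lemma subsingleton_pathR_zero : Subsingleton (PathR 0) := by
  haveI : Subsingleton (Ed 0) := ⟨fun a b => PiLp.ext fun i => i.elim0⟩
  exact ⟨fun f g => ContinuousMap.ext fun s => Subsingleton.elim _ _⟩

lemma subsingleton_probabilityMeasure {X : Type*} [MeasurableSpace X] [Subsingleton X] :
    Subsingleton (ProbabilityMeasure X) := by
  refine ⟨fun μ ν => Subtype.ext (Measure.ext fun s hs => ?_)⟩
  haveI := μ.2
  haveI := ν.2
  rcases Set.eq_empty_or_nonempty s with rfl | ⟨x, hx⟩
  · simp
  · have huniv : s = Set.univ := Set.eq_univ_of_forall fun y => (Subsingleton.elim x y) ▸ hx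
    rw [huniv]
    rw [measure_univ, measure_univ]

end MainLemmas

/-- Lemma 3.5: the extended value function admits the representation
`v(k,t,ω) = sup_{P ∈ ℛ(k,t,ω)} E^P[ψ(k,t, ω ⊗̃_t X)]`. -/
theorem extendedValueFunction_eq_sup_RR {d r : ℕ} {K F : Type*}
    [TopologicalSpace K] [TopologicalSpace F]
    (b : K → F → ℝ≥0 → PathR d → Ed d)
    (σ : K → F → ℝ≥0 → PathR d → Fin d → Fin r → ℝ)
    (hbm : ∀ (k : K) (f : F), Measurable fun p : ℝ≥0 × PathR d => b k f p.1 p.2)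
    (hσm : ∀ (k : K) (f : F), Measurable fun p : ℝ≥0 × PathR d => σ k f p.1 p.2)
    (hbna : ∀ (k : K) (f : F), NonAnticipative fun t ω => b k f t ω)
    (hσna : ∀ (k : K) (f : F), NonAnticipative fun t ω => σ k f t ω)
    (ψ : K → ℝ≥0 → PathR d → ℝ)
    (hψc : Continuous fun p : K × ℝ≥0 × PathR d => ψ p.1 p.2.1 p.2.2)
    (hψb : ∃ C : ℝ, ∀ (k : K) (t : ℝ≥0) (ω : PathR d), |ψ k t ω| ≤ C) :
    ∀ (k : K) (t : ℝ≥0) (ω : PathR d),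
      vFun b σ ψ k t ω =
        ⨆ P ∈ RR b σ k t ω, ∫ x, ψ k t (concat ω x t) ∂(P : ProbabilityMeasure (PathR d)) := by
  intro k t ω
  obtain ⟨C, hC⟩ := hψb
  have hC0 : 0 ≤ C := le_trans (abs_nonneg _) (hC k t ω)
  haveI : Nonempty (ProbabilityMeasure (PathR d)) :=
    ⟨⟨Measure.dirac (ContinuousMap.const ℝ≥0 0), inferInstance⟩⟩
  have hfC : ∀ P : ProbabilityMeasure (PathR d),
      ∫ x, ψ k t x ∂(P : Measure (PathR d)) ≤ C :=
    fun P => integral_abs_le_of_bound _ _ C (fun x => hC k t x)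
  have hgC : ∀ Q : ProbabilityMeasure (PathR d),
      ∫ x, ψ k t (concat ω x t) ∂(Q : Measure (PathR d)) ≤ C :=
    fun Q => integral_abs_le_of_bound _ _ C (fun x => hC k t _)
  have hAB : ∀ P ∈ CC b σ k t ω, ∃ Q ∈ RR b σ k t ω,
      ∫ x, ψ k t (concat ω x t) ∂(Q : Measure (PathR d))
        = ∫ x, ψ k t x ∂(P : Measure (PathR d)) :=
    fun P hP => CC_to_RR b σ k t ω ψ hψc P hP
  have hBA : ∀ Q ∈ RR b σ k t ω, ∃ P ∈ CC b σ k t ω,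
      ∫ x, ψ k t x ∂(P : Measure (PathR d))
        = ∫ x, ψ k t (concat ω x t) ∂(Q : Measure (PathR d)) :=
    fun Q hQ => RR_to_CC b σ k t ω ψ hψc Q hQ
  have hA : (∃ P : ProbabilityMeasure (PathR d), P ∉ CC b σ k t ω) →
      ∃ Q : ProbabilityMeasure (PathR d), Q ∉ RR b σ k t ω := by
    rcases Nat.eq_zero_or_pos d with hd | hd
    · subst hd
      haveI := subsingleton_pathR_zero
      haveI := subsingleton_probabilityMeasure (X := PathR 0)
      rintro ⟨P, hP⟩
      by_contra hcon
      push_neg at hcon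
      obtain ⟨P', hP', -⟩ := hBA P (hcon P)
      exact hP (Subsingleton.elim P' P ▸ hP')
    · exact fun _ => exists_not_mem_RR_of_pos hd b σ k t ω
  have hB : (∃ Q : ProbabilityMeasure (PathR d), Q ∉ RR b σ k t ω) →
      ∃ P : ProbabilityMeasure (PathR d), P ∉ CC b σ k t ω := by
    rcases Nat.eq_zero_or_pos d with hd | hd
    · subst hd
      haveI := subsingleton_pathR_zero
      haveI := subsingleton_probabilityMeasure (X := PathR 0)
      rintro ⟨Q, hQ⟩
      by_contra hcon
      push_neg at hcon
      obtain ⟨Q', hQ', -⟩ := hAB Q (hcon Q)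
      exact hQ (Subsingleton.elim Q' Q ▸ hQ')
    · exact fun _ => exists_not_mem_CC_of_pos hd b σ k t ω
  unfold vFun
  refine le_antisymm ?_ ?_
  · exact iSup_transfer_le hC0 hgC hAB hA
  · exact iSup_transfer_le hC0 hfC hBA hB
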